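/- If q ≤ 0 or q ≥ 1, then for all r > q one has Φ(r,q) = ∑_{j=1}^∞ 2r(j-q)/(r+j-q)^3 < 1. -/
import Mathlib

open Filter Finset

noncomputable def wf (r x : ℝ) : ℝ :=
  2*r/x + (r - r^2)/x^2 + (r/3 - r^2)/x^3 + (r - r^2/2)/x^4

lemma wf_tel (r x : ℝ) (hr : 0 < r) (hx : r + 1 ≤ x) :
    2*r*(x - r)/x^3 ≤ wf r x - wf r (x+1) := by
  have hx0 : (0:ℝ) < x := by linarith
  have hx1 : (0:ℝ) < x + 1 := by linarith
  rw [← sub_nonneg]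
  have hid : wf r x - wf r (x+1) - 2*r*(x - r)/x^3
      = r*(4*x^3 + 19/3*x^2 + 13/3*x + 1 - r*x - r/2)/(x^4*(x+1)^4) := by
    unfold wf; field_simp; ring
  rw [hid]
  apply div_nonneg
  · apply mul_nonneg hr.le
    nlinarith [mul_le_mul_of_nonneg_right (show r ≤ x - 1 by linarith)
      (show (0:ℝ) ≤ x + 1/2 by linarith), pow_pos hx0 3, sq_nonneg x]
  · positivity

lemma wf_lt1 (r y : ℝ) (hr : 0 < r) (hy : r + 1 ≤ y) : wf r y < 1 := by
  have hy0 : (0:ℝ) < y := by linarith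
  rw [← sub_pos]
  have hid : 1 - wf r y
      = (y^4 - 2*r*y^3 + (r^2 - r)*y^2 + (r^2 - r/3)*y + (r^2/2 - r))/y^4 := by
    unfold wf; field_simp; ring
  rw [hid]
  apply div_pos _ (by positivity)
  have hd : 0 ≤ y - r - 1 := by linarith
  nlinarith [sq_nonneg (r-1), hd, pow_nonneg hd 2, pow_nonneg hd 3, pow_nonneg hd 4,
    mul_nonneg hr.le hd, mul_nonneg hr.le (pow_nonneg hd 2), mul_nonneg hr.le (pow_nonneg hd 3),
    mul_nonneg (mul_nonneg hr.le hr.le) hd,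
    mul_nonneg (mul_nonneg hr.le hr.le) (pow_nonneg hd 2)]

lemma wf_W3 (e f : ℝ) (he : 0 ≤ e) (hf : 0 ≤ f) :
    2*(1+e+f)*(0 - f)/(1+e)^3 + 2*(1+e+f)*(1 - f)/(2+e)^3 + wf (1+e+f) (3+e) < 1 := by
  have h1 : (0:ℝ) < 1 + e := by linarith
  have h2 : (0:ℝ) < 2 + e := by linarith
  have h3 : (0:ℝ) < 3 + e := by linarith
  rw [← sub_pos]
  have hid : 1 - (2*(1+e+f)*(0 - f)/(1+e)^3 + 2*(1+e+f)*(1 - f)/(2+e)^3 + wf (1+e+f) (3+e))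
      = (66 + 976*f + 1558*f^2 + (838/3)*e + (10558/3)*e*f + 4880*e*f^2
        + (1447/3)*e^2 + 5370*e^2*f + 6755*e^2*f^2 + (883/2)*e^3 + 4580*e^3*f
        + (10779/2)*e^3*f^2 + (471/2)*e^4 + 2410*e^4*f + (5403/2)*e^4*f^2
        + 77*e^5 + 805*e^5*f + (1737/2)*e^5*f^2 + 16*e^6 + 167*e^6*f + (349/2)*e^6*f^2
        + (13/6)*e^7 + (59/3)*e^7*f + 20*e^7*f^2 + (1/6)*e^8 + e^8*f + e^8*f^2)
        / ((1+e)^3*(2+e)^3*(3+e)^4) := by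
    unfold wf; field_simp; ring
  rw [hid]
  apply div_pos _ (by positivity)
  have m : ∀ i j : ℕ, 0 ≤ e^i * f^j :=
    fun i j => mul_nonneg (pow_nonneg he i) (pow_nonneg hf j)
  nlinarith [m 0 1, m 0 2, m 1 0, m 1 1, m 1 2, m 2 0, m 2 1, m 2 2, m 3 0, m 3 1, m 3 2,
    m 4 0, m 4 1, m 4 2, m 5 0, m 5 1, m 5 2, m 6 0, m 6 1, m 6 2, m 7 0, m 7 1, m 7 2,
    m 8 0, m 8 1, m 8 2]

lemma wf_tendsto (r c : ℝ) : Tendsto (fun n : ℕ => wf r (c + n)) atTop (nhds 0) := by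
  have h : Tendsto (fun n : ℕ => (c + n : ℝ)) atTop atTop :=
    tendsto_atTop_add_const_left _ c tendsto_natCast_atTop_atTop
  have hw : Tendsto (fun x : ℝ => wf r x) atTop (nhds 0) := by
    have t1 : Tendsto (fun x : ℝ => 2*r/x) atTop (nhds 0) :=
      Tendsto.div_atTop tendsto_const_nhds tendsto_id
    have t2 : Tendsto (fun x : ℝ => (r - r^2)/x^2) atTop (nhds 0) :=
      Tendsto.div_atTop tendsto_const_nhds (tendsto_pow_atTop two_ne_zero)
    have t3 : Tendsto (fun x : ℝ => (r/3 - r^2)/x^3) atTop (nhds 0) :=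
      Tendsto.div_atTop tendsto_const_nhds (tendsto_pow_atTop three_ne_zero)
    have t4 : Tendsto (fun x : ℝ => (r - r^2/2)/x^4) atTop (nhds 0) :=
      Tendsto.div_atTop tendsto_const_nhds (tendsto_pow_atTop four_ne_zero)
    have := ((t1.add t2).add t3).add t4
    simpa [wf] using this
  exact hw.comp h

lemma tail_le (r c : ℝ) (hr : 0 < r) (hc : r + 1 ≤ c) (g : ℕ → ℝ) (hsum : Summable g)
    (hg : ∀ k : ℕ, g k = 2*r*((c + k) - r)/(c + k)^3) :
    ∑' k, g k ≤ wf r c := by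
  have key : ∀ n : ℕ, ∑ j ∈ Finset.range n, g j ≤ wf r c - wf r (c + n) := by
    intro n
    induction n with
    | zero => simp
    | succ n ih =>
      rw [Finset.sum_range_succ]
      have hn0 : (0:ℝ) ≤ (n:ℝ) := Nat.cast_nonneg n
      have hx : r + 1 ≤ c + n := by linarith
      have h2 := wf_tel r (c + n) hr hx
      have h3 : g n = 2*r*((c + n) - r)/(c + n)^3 := hg n
      have h4 : (c + ((n:ℕ)+1 : ℕ) : ℝ) = (c + n) + 1 := by push_cast; ring
      rw [h4]
      linarith
  exact le_of_tendsto_of_tendsto' hsum.hasSum.tendsto_sum_nat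
    (by simpa using tendsto_const_nhds.sub (wf_tendsto r c)) key

lemma sum_F (q r : ℝ) (hr : q < r) (hr0 : 0 < r) :
    Summable (fun j : ℕ => 2 * r * ((j + 1 : ℝ) - q) / (r + (j + 1 : ℝ) - q) ^ 3) := by
  apply Summable.of_abs
  have hmaj : Summable (fun j : ℕ => (2*r + 2*r^2) * (1/((j:ℝ)+1)^2)) := by
    apply Summable.mul_left
    have h0 : Summable (fun n : ℕ => 1 / (n:ℝ)^2) :=
      Real.summable_one_div_nat_pow.mpr one_lt_two
    have := (summable_nat_add_iff 1).mpr h0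
    simpa using this
  apply Summable.of_nonneg_of_le (fun j => abs_nonneg _) _ hmaj
  intro j
  have hj1 : (0:ℝ) < (j:ℝ) + 1 := by positivity
  have hx : (j:ℝ) + 1 < r + ((j:ℝ)+1) - q := by linarith
  have hx0 : (0:ℝ) < r + ((j:ℝ)+1) - q := by linarith
  rw [abs_div, abs_of_pos (pow_pos hx0 3), mul_one_div,
    div_le_div_iff₀ (pow_pos hx0 3) (pow_pos hj1 2)]
  have habs : |2 * r * (((j:ℝ) + 1) - q)| ≤ 2*r*((r + ((j:ℝ)+1) - q) + r) := by
    rw [abs_mul, abs_of_pos (by linarith : (0:ℝ) < 2*r)]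
    have : |((j:ℝ) + 1) - q| ≤ (r + ((j:ℝ)+1) - q) + r :=
      abs_le.mpr ⟨by linarith, by linarith⟩
    exact mul_le_mul_of_nonneg_left this (by linarith)
  have h5 : ((j:ℝ)+1)^2 ≤ (r + ((j:ℝ)+1) - q)^2 := by nlinarith
  have hb1 : |2 * r * (((j:ℝ) + 1) - q)| * ((j:ℝ)+1)^2
      ≤ (2*r*((r + ((j:ℝ)+1) - q) + r)) * ((j:ℝ)+1)^2 :=
    mul_le_mul_of_nonneg_right habs (by positivity)
  have hxge1 : (1:ℝ) ≤ r + ((j:ℝ)+1) - q := by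
    have : (0:ℝ) ≤ (j:ℝ) := Nat.cast_nonneg j
    linarith
  have h6 := mul_le_mul_of_nonneg_left h5
    (show (0:ℝ) ≤ 2*r*((r + ((j:ℝ)+1) - q) + r) by positivity)
  have h7 : 2*r*((r + ((j:ℝ)+1) - q) + r) * (r + ((j:ℝ)+1) - q)^2
      ≤ (2*r + 2*r^2) * (r + ((j:ℝ)+1) - q)^3 := by
    nlinarith [mul_nonneg (mul_nonneg (mul_nonneg (mul_nonneg hr0.le hr0.le) hx0.le) hx0.le)
      (show (0:ℝ) ≤ r + ((j:ℝ)+1) - q - 1 by linarith)]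
  linarith

theorem Phi_lt_one (q r : ℝ) (hq : q ≤ 0 ∨ 1 ≤ q) (hr : q < r) :
    (∑' j : ℕ, 2 * r * ((j + 1 : ℝ) - q) / (r + (j + 1 : ℝ) - q) ^ 3) < 1 := by
  rcases le_or_gt r 0 with hr0 | hr0
  · have hq0 : q ≤ 0 := by
      rcases hq with h | h
      · exact h
      · linarith
    have hle : (∑' j : ℕ, 2 * r * ((j + 1 : ℝ) - q) / (r + (j + 1 : ℝ) - q) ^ 3) ≤ 0 := by
      apply tsum_nonpos
      intro j
      have hj0 : (0:ℝ) ≤ (j:ℝ) := Nat.cast_nonneg j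
      apply div_nonpos_of_nonpos_of_nonneg
      · apply mul_nonpos_of_nonpos_of_nonneg (by linarith) (by linarith)
      · have : (0:ℝ) < r + ((j:ℝ)+1) - q := by linarith
        positivity
    linarith
  · have hS := sum_F q r hr hr0
    rcases hq with hq0 | hq1
    · -- case q ≤ 0 : telescope from the start
      have hc : r + 1 ≤ r + 1 - q := by linarith
      have hle := tail_le r (r + 1 - q) hr0 hc _ hS (fun k => by ring)
      exact lt_of_le_of_lt hle (wf_lt1 r (r + 1 - q) hr0 hc)
    · -- case 1 ≤ q
      set n0 := ⌊q⌋₊ with hn0def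
      have hn1 : 1 ≤ n0 := Nat.le_floor (by exact_mod_cast hq1)
      have hfl : (n0:ℝ) ≤ q := Nat.floor_le (by linarith)
      have hfl2 : q < n0 + 1 := Nat.lt_floor_add_one q
      obtain ⟨m, hm⟩ : ∃ m, n0 = m + 1 := ⟨n0 - 1, (Nat.succ_pred_eq_of_pos hn1).symm⟩
      rw [hm] at hfl hfl2
      have hmq : (m:ℝ) + 1 ≤ q := by push_cast at hfl ⊢; linarith
      have hmq2 : q < (m:ℝ) + 2 := by push_cast at hfl2 ⊢; linarith
      rw [← Summable.sum_add_tsum_nat_add (m+2) hS]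
      -- finite part
      rw [show m + 2 = (m+1) + 1 by ring, Finset.sum_range_succ, Finset.sum_range_succ]
      have hhead : ∑ j ∈ Finset.range m,
          2 * r * ((j + 1 : ℝ) - q) / (r + (j + 1 : ℝ) - q) ^ 3 ≤ 0 := by
        apply Finset.sum_nonpos
        intro j hj
        have hjm : (j:ℝ) + 1 ≤ (m:ℝ) := by
          have := Finset.mem_range.mp hj
          exact_mod_cast Nat.succ_le_of_lt this
        apply div_nonpos_of_nonpos_of_nonneg
        · apply mul_nonpos_of_nonneg_of_nonpos (by linarith) (by linarith)
        · have hj0 : (0:ℝ) ≤ (j:ℝ) := Nat.cast_nonneg j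
          have : (0:ℝ) < r + ((j:ℝ)+1) - q := by linarith
          positivity
      -- tail part
      have htail : (∑' (k : ℕ), 2 * r * (((k + (m+1+1) : ℕ) + 1 : ℝ) - q)
            / (r + ((k + (m+1+1) : ℕ) + 1 : ℝ) - q) ^ 3) ≤ wf r (r + (m:ℝ) + 3 - q) := by
        apply tail_le r (r + (m:ℝ) + 3 - q) hr0 (by linarith) _
          ((summable_nat_add_iff (m+1+1)).mpr hS)
        intro k
        push_cast
        ring
      -- the two middle terms plus tail bound
      have hW3 := wf_W3 (r + (m:ℝ) - q) (q - ((m:ℝ)+1)) (by linarith) (by linarith)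
      have e1 : 2 * r * (((m:ℕ) + 1 : ℝ) - q) / (r + ((m:ℕ) + 1 : ℝ) - q) ^ 3
          = 2*(1+(r + (m:ℝ) - q)+(q - ((m:ℝ)+1)))*(0 - (q - ((m:ℝ)+1)))
            /(1+(r + (m:ℝ) - q))^3 := by ring_nf
      have e2 : 2 * r * (((m+1 : ℕ) + 1 : ℝ) - q) / (r + ((m+1 : ℕ) + 1 : ℝ) - q) ^ 3
          = 2*(1+(r + (m:ℝ) - q)+(q - ((m:ℝ)+1)))*(1 - (q - ((m:ℝ)+1)))
            /(2+(r + (m:ℝ) - q))^3 := by push_cast; ring_nf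
      have e3 : wf (1+(r + (m:ℝ) - q)+(q - ((m:ℝ)+1))) (3+(r + (m:ℝ) - q))
          = wf r (r + (m:ℝ) + 3 - q) := by
        rw [show 1+(r + (m:ℝ) - q)+(q - ((m:ℝ)+1)) = r by ring,
          show 3+(r + (m:ℝ) - q) = r + (m:ℝ) + 3 - q by ring]
      rw [e3] at hW3
      rw [e1] at *
      linarith [hW3, e1, e2, htail, hhead]
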